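/- Let n be a positive integer, H a complex Hilbert space, Σ ⊆ 𝔽ₙ⁺ a nonempty admissible set, and M : Σ → H a map. Then there exist a complex Hilbert space E, a linear isometry ι : H → E, and isometries W₁,…,Wₙ ∈ B(E) with pairwise orthogonal ranges (Wᵢ*Wᵢ = I and Wᵢ*Wⱼ = 0 for i ≠ j) such that ι(M(σ)) = W_σ(ι(M(g₀))) for every σ ∈ Σ — equivalently, there is a *-representation π of C*(S₁,…,Sₙ) on E ⊇ H with M(p) = π(p(S₁,…,Sₙ))M(g₀) for all p ∈ ℂΣ — if and only if K₃ = K₄. -/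

import Mathlib

/-!
Statement 5: vector-valued moment problem for *-representations of the
Cuntz–Toeplitz algebra, stated via isometries with pairwise orthogonal ranges.
-/

open scoped InnerProductSpace ComplexOrder ComplexInnerProductSpace Classical
open ContinuousLinearMap

noncomputable section

universe u

/-- Words in the free monoid `𝔽ₙ⁺` on `n` generators (the empty word is `g₀`). -/
abbrev Wd (n : ℕ) := List (Fin n)

/-- A set `Σ ⊆ 𝔽ₙ⁺` is admissible if `αβ ∈ Σ` implies `β ∈ Σ`. -/
def Adm {n : ℕ} (S : Set (Wd n)) : Prop := ∀ α β : Wd n, α ++ β ∈ S → β ∈ S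

/-- `σ ≤ α` : `σ` is a prefix of `α`, i.e. `α = στ` for some `τ`. -/
def pfx {n : ℕ} (σ α : Wd n) : Prop := ∃ τ : Wd n, α = σ ++ τ

/-- `α ∖ σ` : the unique `τ` with `α = στ` when `σ ≤ α`. -/
def wq {n : ℕ} (α σ : Wd n) : Wd n := α.drop σ.length

/-- `W_α = W_{i₁} ⋯ W_{i_k}` for a word `α = g_{i₁} ⋯ g_{i_k}`, `W_{g₀} = I`. -/
def wordOp {E : Type*} [NormedAddCommGroup E] [InnerProductSpace ℂ E]
    {n : ℕ} (T : Fin n → (E →L[ℂ] E)) (α : Wd n) : E →L[ℂ] E := (α.map T).prod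

variable {H : Type u} [NormedAddCommGroup H] [InnerProductSpace ℂ H] [CompleteSpace H]

/-- `K₃((α,β),(σ,γ)) = ⟨M(σγ), M(αβ)⟩` (inner product linear in its first argument). -/
def K3 {n : ℕ} (M : Wd n → H) (x y : Wd n × Wd n) : ℂ :=
  ⟪M (x.1 ++ x.2), M (y.1 ++ y.2)⟫_ℂ

/-- `K₄((α,β),(σ,γ)) = ⟨M((σ∖α)γ), M(β)⟩` if `α ≤ σ`, `⟨M(γ), M((α∖σ)β)⟩` if `σ < α`,
and `0` otherwise (inner product linear in its first argument). -/
def K4 {n : ℕ} (M : Wd n → H) (x y : Wd n × Wd n) : ℂ :=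
  if pfx x.1 y.1 then ⟪M x.2, M (wq y.1 x.1 ++ y.2)⟫_ℂ
  else if pfx y.1 x.1 then ⟪M (wq x.1 y.1 ++ x.2), M y.2⟫_ℂ
  else 0

/-- A dilation of `M : Σ → H` to a Hilbert space `E ⊇ H` carrying isometries
`W₁,…,Wₙ` with pairwise orthogonal ranges (equivalently, a *-representation of
`C*(S₁,…,Sₙ)`), with `ι(M(σ)) = W_σ(ι(M(g₀)))` for all `σ ∈ Σ`. -/
structure IsomRepVec (n : ℕ) (H : Type u) [NormedAddCommGroup H]
    [InnerProductSpace ℂ H] [CompleteSpace H] (S : Set (Wd n)) (M : Wd n → H) :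
    Type (u + 1) where
  E : Type u
  [instN : NormedAddCommGroup E]
  [instI : InnerProductSpace ℂ E]
  [instC : CompleteSpace E]
  ι : H →ₗᵢ[ℂ] E
  W : Fin n → (E →L[ℂ] E)
  isom : ∀ i, adjoint (W i) * W i = 1
  orth : ∀ i j, i ≠ j → adjoint (W i) * W j = 0
  moment : ∀ σ ∈ S, ι (M σ) = wordOp W σ (ι (M ([] : Wd n)))


open scoped ENNReal NNReal
set_option linter.unusedSectionVars false
set_option linter.unusedVariables false
set_option maxHeartbeats 1000000

-- pfx helpers
lemma pfx_nil {n : ℕ} (σ : Wd n) : pfx [] σ := ⟨σ, rfl⟩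
lemma not_pfx_cons_nil {n : ℕ} (i : Fin n) (α : Wd n) : ¬ pfx (i :: α) [] := by
  rintro ⟨τ, h⟩; simp at h
lemma pfx_cons_iff {n : ℕ} (i j : Fin n) (α σ : Wd n) :
    pfx (i :: α) (j :: σ) ↔ i = j ∧ pfx α σ := by
  constructor
  · rintro ⟨τ, h⟩
    rw [List.cons_append] at h
    obtain ⟨h1, h2⟩ := List.cons.injEq .. ▸ h
    exact ⟨h1.symm, τ, h2⟩
  · rintro ⟨rfl, τ, rfl⟩; exact ⟨τ, rfl⟩
lemma wq_nil {n : ℕ} (σ : Wd n) : wq σ [] = σ := rfl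
lemma wq_cons {n : ℕ} (i : Fin n) (α σ : Wd n) : wq (i :: σ) (i :: α) = wq σ α := by
  simp [wq]
lemma pfx_append_wq {n : ℕ} {α σ : Wd n} (h : pfx α σ) : σ = α ++ wq σ α := by
  obtain ⟨τ, rfl⟩ := h; simp [wq]

lemma wordOp_nil {E : Type*} [NormedAddCommGroup E] [InnerProductSpace ℂ E]
    {n : ℕ} (T : Fin n → (E →L[ℂ] E)) : wordOp T [] = 1 := rfl
lemma wordOp_cons {E : Type*} [NormedAddCommGroup E] [InnerProductSpace ℂ E]
    {n : ℕ} (T : Fin n → (E →L[ℂ] E)) (i : Fin n) (α : Wd n) :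
    wordOp T (i :: α) = T i * wordOp T α := by
  simp [wordOp]
lemma wordOp_append {E : Type*} [NormedAddCommGroup E] [InnerProductSpace ℂ E]
    {n : ℕ} (T : Fin n → (E →L[ℂ] E)) (α β : Wd n) :
    wordOp T (α ++ β) = wordOp T α * wordOp T β := by
  simp [wordOp]

lemma inner_wordOp {E : Type u} [NormedAddCommGroup E] [InnerProductSpace ℂ E]
    [CompleteSpace E] {n : ℕ} (W : Fin n → (E →L[ℂ] E))
    (hiso : ∀ i, adjoint (W i) * W i = 1)
    (horth : ∀ i j, i ≠ j → adjoint (W i) * W j = 0) :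
    ∀ (α σ : Wd n) (u v : E), ⟪wordOp W α u, wordOp W σ v⟫_ℂ =
      if pfx α σ then ⟪u, wordOp W (wq σ α) v⟫_ℂ
      else if pfx σ α then ⟪wordOp W (wq α σ) u, v⟫_ℂ else 0 := by
  intro α
  induction α with
  | nil =>
    intro σ u v
    rw [if_pos (pfx_nil σ)]
    simp [wordOp_nil, wq_nil]
  | cons i α ih =>
    intro σ u v
    cases σ with
    | nil =>
      rw [if_neg (not_pfx_cons_nil i α), if_pos (pfx_nil _)]
      simp [wordOp_nil, wq_nil]
    | cons j σ =>
      have key : ⟪wordOp W (i :: α) u, wordOp W (j :: σ) v⟫_ℂ =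
          ⟪wordOp W α u, ((adjoint (W i)) * (W j)) (wordOp W σ v)⟫_ℂ := by
        rw [wordOp_cons, wordOp_cons, mul_apply_eq_comp, mul_apply_eq_comp]
        rw [← adjoint_inner_right (W i)]
        rfl
      by_cases hij : i = j
      · subst hij
        rw [key, hiso i, one_apply_eq_self, ih σ u v]
        by_cases h1 : pfx α σ
        · rw [if_pos h1, if_pos ((pfx_cons_iff i i α σ).2 ⟨rfl, h1⟩), wq_cons]
        · rw [if_neg h1, if_neg (fun h => h1 ((pfx_cons_iff i i α σ).1 h).2)]
          by_cases h2 : pfx σ α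
          · rw [if_pos h2, if_pos ((pfx_cons_iff i i σ α).2 ⟨rfl, h2⟩), wq_cons]
          · rw [if_neg h2, if_neg (fun h => h2 ((pfx_cons_iff i i σ α).1 h).2)]
      · rw [key, horth i j hij, zero_apply, inner_zero_right]
        rw [if_neg (fun h => hij ((pfx_cons_iff i j α σ).1 h).1),
            if_neg (fun h => hij (((pfx_cons_iff j i σ α).1 h).1).symm)]


lemma forward_dir {n : ℕ} (S : Set (Wd n)) (hne : S.Nonempty) (hadm : Adm S)
    (M : Wd n → H) (R : IsomRepVec n H S M) :
    ∀ x y : {p : Wd n × Wd n // p.1 ++ p.2 ∈ S}, K3 M x.1 y.1 = K4 M x.1 y.1 := by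
  letI := R.instN; letI := R.instI; letI := R.instC
  rintro ⟨⟨a, b⟩, hx⟩ ⟨⟨c, d⟩, hy⟩
  -- moment in split form
  have moment' : ∀ α β : Wd n, α ++ β ∈ S → R.ι (M (α ++ β)) = wordOp R.W α (R.ι (M β)) := by
    intro α β hab
    have hb : β ∈ S := hadm α β hab
    rw [R.moment _ hab, R.moment _ hb, wordOp_append, mul_apply_eq_comp]
  have hmain := inner_wordOp R.W R.isom R.orth a c (R.ι (M b)) (R.ι (M d))
  have hK3 : K3 M (a, b) (c, d) = ⟪wordOp R.W a (R.ι (M b)), wordOp R.W c (R.ι (M d))⟫_ℂ := by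
    rw [← moment' a b hx, ← moment' c d hy, K3]
    exact (R.ι.inner_map_map _ _).symm
  rw [hK3, hmain, K4]
  by_cases h1 : pfx a c
  · rw [if_pos h1, if_pos h1]
    have hcd : wq c a ++ d ∈ S := by
      apply hadm a
      rw [← List.append_assoc, ← pfx_append_wq h1]; exact hy
    rw [← moment' (wq c a) d hcd]
    exact R.ι.inner_map_map _ _
  · rw [if_neg h1, if_neg h1]
    by_cases h2 : pfx c a
    · rw [if_pos h2, if_pos h2]
      rw [← moment' (wq a c) b (hadm c _ (by rw [← List.append_assoc, ← pfx_append_wq h2]; exact hx))]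
      exact R.ι.inner_map_map _ _
    · rw [if_neg h2, if_neg h2]

set_option linter.unusedSectionVars false
set_option linter.unusedVariables false

lemma inner_lc {ι κ : Type*} (u : ι → H) (v : κ → H) (f : ι →₀ ℂ) (g : κ →₀ ℂ) :
    ⟪Finsupp.linearCombination ℂ u f, Finsupp.linearCombination ℂ v g⟫_ℂ
      = ∑ a ∈ f.support, ∑ b ∈ g.support, (starRingEnd ℂ) (f a) * g b * ⟪u a, v b⟫_ℂ := by
  rw [Finsupp.linearCombination_apply, Finsupp.linearCombination_apply, Finsupp.sum, Finsupp.sum,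
    sum_inner]
  refine Finset.sum_congr rfl fun a _ => ?_
  rw [inner_sum]
  refine Finset.sum_congr rfl fun b _ => ?_
  rw [inner_smul_left, inner_smul_right]; ring

section TI
variable {n : ℕ} (S : Set (Wd n)) (M : Wd n → H) (i : Fin n)

def SetI : Set (Wd n) := {β | (i :: β) ∈ S}

def phi : (↥(SetI S i) →₀ ℂ) →ₗ[ℂ] H :=
  Finsupp.linearCombination ℂ (fun β => M β.1)

def psi : (↥(SetI S i) →₀ ℂ) →ₗ[ℂ] H :=
  Finsupp.linearCombination ℂ (fun β => M (i :: β.1))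

def Ri : Submodule ℂ H := (LinearMap.range (psi S M i)).topologicalClosure

variable {S M i}
variable (h1 : ∀ b c : Wd n, (i :: b) ∈ S → (i :: c) ∈ S →
  ⟪M (i :: b), M (i :: c)⟫_ℂ = ⟪M b, M c⟫_ℂ)

include h1 in
lemma inner_psi_psi (f g : ↥(SetI S i) →₀ ℂ) :
    ⟪psi S M i f, psi S M i g⟫_ℂ = ⟪phi S M i f, phi S M i g⟫_ℂ := by
  rw [phi, psi, inner_lc, inner_lc]
  refine Finset.sum_congr rfl fun a _ => Finset.sum_congr rfl fun b _ => ?_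
  rw [h1 a.1 b.1 a.2 b.2]

include h1 in
lemma ker_phi_le : LinearMap.ker (phi S M i) ≤ LinearMap.ker (psi S M i) := by
  intro f hf
  rw [LinearMap.mem_ker] at hf ⊢
  rw [← inner_self_eq_zero (𝕜 := ℂ), inner_psi_psi h1, hf, inner_zero_right]

def tmap : ↥(LinearMap.range (phi S M i)) →ₗ[ℂ] H :=
  (Submodule.liftQ _ (psi S M i) (ker_phi_le h1)).comp
    ((LinearMap.quotKerEquivRange (phi S M i)).symm : _ →ₗ[ℂ] _)

lemma tmap_phi (f : ↥(SetI S i) →₀ ℂ) :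
    tmap h1 ⟨phi S M i f, LinearMap.mem_range_self _ f⟩ = psi S M i f := by
  have h := LinearMap.quotKerEquivRange_apply_mk (phi S M i) f
  have h2 : (LinearMap.quotKerEquivRange (phi S M i)).symm
      ⟨phi S M i f, LinearMap.mem_range_self _ f⟩ = Submodule.Quotient.mk f := by
    rw [LinearEquiv.symm_apply_eq]
    exact Subtype.ext h.symm
  rw [tmap, LinearMap.comp_apply]
  erw [h2]
  exact Submodule.liftQ_apply _ _ _

include h1 in
lemma tmap_inner (x y : ↥(LinearMap.range (phi S M i))) :
    ⟪tmap h1 x, tmap h1 y⟫_ℂ = ⟪(x : H), (y : H)⟫_ℂ := by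
  obtain ⟨f, hf⟩ := x.2
  obtain ⟨g, hg⟩ := y.2
  have hx : x = ⟨phi S M i f, LinearMap.mem_range_self _ f⟩ := Subtype.ext hf.symm
  have hy : y = ⟨phi S M i g, LinearMap.mem_range_self _ g⟩ := Subtype.ext hg.symm
  rw [hx, hy, tmap_phi h1 f, tmap_phi h1 g, inner_psi_psi h1]

def Dbar : Submodule ℂ H := (LinearMap.range (phi S M i)).topologicalClosure

instance : CompleteSpace ↥(Dbar (S := S) (M := M) (i := i)) :=
  (Submodule.isClosed_topologicalClosure _).completeSpace_coe

def tiso : ↥(LinearMap.range (phi S M i)) →ₗᵢ[ℂ] H :=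
  ⟨tmap h1, fun x => by
    rw [@norm_eq_sqrt_re_inner ℂ, @norm_eq_sqrt_re_inner ℂ (↥(LinearMap.range (phi S M i)))]
    rw [tmap_inner h1 x x]
    rfl⟩

def emap : ↥(LinearMap.range (phi S M i)) →ₗᵢ[ℂ] ↥(Dbar (S := S) (M := M) (i := i)) :=
  ⟨Submodule.inclusion (Submodule.le_topologicalClosure _), fun x => rfl⟩

lemma dense_emap : DenseRange (emap (S := S) (M := M) (i := i)) := by
  intro x
  rw [closure_subtype]
  have hx : (x : H) ∈ closure ((LinearMap.range (phi S M i)) : Set H) := by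
    rw [← Submodule.topologicalClosure_coe]
    exact x.2
  refine closure_mono ?_ hx
  intro y hy
  exact ⟨emap ⟨y, hy⟩, ⟨⟨y, hy⟩, rfl⟩, rfl⟩

def Vbar : ↥(Dbar (S := S) (M := M) (i := i)) →L[ℂ] H :=
  ContinuousLinearMap.extend (tiso h1).toContinuousLinearMap
    (emap (S := S) (M := M) (i := i)).toContinuousLinearMap

lemma Vbar_emap (x : ↥(LinearMap.range (phi S M i))) : Vbar h1 (emap x) = tmap h1 x :=
  ContinuousLinearMap.extend_eq _ dense_emap
    ((emap (S := S) (M := M) (i := i)).isometry.isUniformInducing) x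

lemma Vbar_inner (x y : ↥(Dbar (S := S) (M := M) (i := i))) :
    ⟪Vbar h1 x, Vbar h1 y⟫_ℂ = ⟪(x : H), (y : H)⟫_ℂ := by
  have hd : DenseRange (Prod.map (emap (S := S) (M := M) (i := i))
      (emap (S := S) (M := M) (i := i))) := (dense_emap).prodMap (dense_emap)
  have hfc : Continuous (fun p : ↥(Dbar (S := S) (M := M) (i := i)) ×
      ↥(Dbar (S := S) (M := M) (i := i)) => ⟪Vbar h1 p.1, Vbar h1 p.2⟫_ℂ) := by
    exact Continuous.inner ((Vbar h1).continuous.comp continuous_fst)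
      ((Vbar h1).continuous.comp continuous_snd)
  have hgc : Continuous (fun p : ↥(Dbar (S := S) (M := M) (i := i)) ×
      ↥(Dbar (S := S) (M := M) (i := i)) => ⟪(p.1 : H), (p.2 : H)⟫_ℂ) := by
    exact Continuous.inner (continuous_subtype_val.comp continuous_fst)
      (continuous_subtype_val.comp continuous_snd)
  have heq := hd.equalizer hfc hgc (by
    funext p
    simp only [Function.comp_apply, Prod.map]
    rw [Vbar_emap h1, Vbar_emap h1, tmap_inner h1]
    rfl)
  exact congrFun heq (x, y)

lemma tmap_mem_range_psi (y : ↥(LinearMap.range (phi S M i))) :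
    tmap h1 y ∈ LinearMap.range (psi S M i) := by
  obtain ⟨f, hf⟩ := y.2
  have hy : y = ⟨phi S M i f, LinearMap.mem_range_self _ f⟩ := Subtype.ext hf.symm
  rw [hy, tmap_phi h1 f]
  exact LinearMap.mem_range_self _ f

lemma Vbar_mem_Ri (x : ↥(Dbar (S := S) (M := M) (i := i))) :
    Vbar h1 x ∈ Ri S M i := by
  have hx : x ∈ closure (Set.range (emap (S := S) (M := M) (i := i))) := dense_emap x
  have h2 : Vbar h1 x ∈ closure ((Vbar h1) '' (Set.range emap)) :=
    image_closure_subset_closure_image (Vbar h1).continuous (Set.mem_image_of_mem _ hx)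
  have h3 : (Vbar h1) '' (Set.range emap) ⊆ (Ri S M i : Set H) := by
    rintro - ⟨-, ⟨y, rfl⟩, rfl⟩
    rw [Vbar_emap h1 y]
    exact Submodule.le_topologicalClosure _ (tmap_mem_range_psi h1 y)
  have hcl : IsClosed ((Ri S M i : Set H)) := Submodule.isClosed_topologicalClosure _
  have h5 := closure_mono h3 h2
  rwa [hcl.closure_eq] at h5

def Topi : H →L[ℂ] H := (Vbar h1).comp (Submodule.orthogonalProjection (Dbar (S := S) (M := M) (i := i)))

lemma M_mem_range_phi {β : Wd n} (hb : (i :: β) ∈ S) :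
    M β ∈ LinearMap.range (phi S M i) := by
  refine ⟨Finsupp.single ⟨β, hb⟩ 1, ?_⟩
  rw [phi, Finsupp.linearCombination_single, one_smul]

lemma M_mem_Dbar {β : Wd n} (hb : (i :: β) ∈ S) :
    M β ∈ Dbar (S := S) (M := M) (i := i) :=
  Submodule.le_topologicalClosure _ (M_mem_range_phi hb)

lemma Topi_M {β : Wd n} (hb : (i :: β) ∈ S) : Topi h1 (M β) = M (i :: β) := by
  rw [Topi, ContinuousLinearMap.comp_apply]
  have hproj : Submodule.orthogonalProjection (Dbar (S := S) (M := M) (i := i)) (M β)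
      = ⟨M β, M_mem_Dbar hb⟩ :=
    Submodule.orthogonalProjection_mem_subspace_eq_self (⟨M β, M_mem_Dbar hb⟩ : ↥(Dbar (S := S) (M := M) (i := i)))
  rw [hproj]
  have hemap : (⟨M β, M_mem_Dbar hb⟩ : ↥(Dbar (S := S) (M := M) (i := i)))
      = emap ⟨M β, M_mem_range_phi hb⟩ := rfl
  rw [hemap, Vbar_emap h1]
  have hsing : (⟨M β, M_mem_range_phi hb⟩ : ↥(LinearMap.range (phi S M i)))
      = ⟨phi S M i (Finsupp.single ⟨β, hb⟩ 1), LinearMap.mem_range_self _ _⟩ := by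
    apply Subtype.ext
    show M β = phi S M i (Finsupp.single ⟨β, hb⟩ 1)
    rw [phi, Finsupp.linearCombination_single, one_smul]
  rw [hsing, tmap_phi h1]
  rw [psi, Finsupp.linearCombination_single, one_smul]

lemma Topi_inner (x y : H) :
    ⟪Topi h1 x, Topi h1 y⟫_ℂ =
      ⟪(Submodule.orthogonalProjection (Dbar (S := S) (M := M) (i := i)) x : H),
       (Submodule.orthogonalProjection (Dbar (S := S) (M := M) (i := i)) y : H)⟫_ℂ := by
  rw [Topi, ContinuousLinearMap.comp_apply, ContinuousLinearMap.comp_apply, Vbar_inner h1]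

lemma Topi_mem_Ri (x : H) : Topi h1 x ∈ Ri S M i := Vbar_mem_Ri h1 _

end TI

section Orth
variable {n : ℕ} {S : Set (Wd n)} {M : Wd n → H} {i j : Fin n}

lemma Ri_orth
    (h2 : ∀ b c : Wd n, (i :: b) ∈ S → (j :: c) ∈ S → ⟪M (i :: b), M (j :: c)⟫_ℂ = 0) :
    ∀ x ∈ Ri S M i, ∀ y ∈ Ri S M j, ⟪x, y⟫_ℂ = 0 := by
  have step1 : ∀ u ∈ LinearMap.range (psi S M i), ∀ v ∈ LinearMap.range (psi S M j),
      ⟪u, v⟫_ℂ = 0 := by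
    rintro - ⟨f, rfl⟩ - ⟨g, rfl⟩
    rw [psi, psi, inner_lc]
    refine Finset.sum_eq_zero fun a _ => Finset.sum_eq_zero fun b _ => ?_
    rw [h2 a.1 b.1 a.2 b.2, mul_zero]
  have step2 : ∀ u ∈ LinearMap.range (psi S M i), ∀ v ∈ Ri S M j, ⟪u, v⟫_ℂ = 0 := by
    intro u hu
    have hsub : LinearMap.range (psi S M j) ≤ (innerSL ℂ u).ker := by
      intro v hv
      rw [LinearMap.mem_ker, ContinuousLinearMap.coe_coe, innerSL_apply_apply]
      exact step1 u hu v hv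
    have hle : Ri S M j ≤ (innerSL ℂ u).ker :=
      Submodule.topologicalClosure_minimal _ hsub (ContinuousLinearMap.isClosed_ker _)
    intro v hv
    have hv' := hle hv
    rwa [LinearMap.mem_ker, ContinuousLinearMap.coe_coe, innerSL_apply_apply] at hv'
  intro x hx y hy
  have hsub : LinearMap.range (psi S M i) ≤ (innerSL ℂ y).ker := by
    intro u hu
    rw [LinearMap.mem_ker, ContinuousLinearMap.coe_coe, innerSL_apply_apply]
    have := step2 u hu y hy
    rw [← inner_conj_symm, this, map_zero]
  have hle : Ri S M i ≤ (innerSL ℂ y).ker :=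
    Submodule.topologicalClosure_minimal _ hsub (ContinuousLinearMap.isClosed_ker _)
  have := hle hx
  rw [LinearMap.mem_ker] at this
  simp only [ContinuousLinearMap.coe_coe, innerSL_apply_apply] at this
  rw [← inner_conj_symm, this, map_zero]

end Orth

section UPart
variable {n : ℕ}

abbrev Fsp (n : ℕ) (H : Type u) [NormedAddCommGroup H] : Type u := ↥(lp (fun _ : Wd n => H) 2)

variable (hn : 0 < n) (i : Fin n)

def zr : Fin n := ⟨0, hn⟩

def jmap : Wd n → Wd n := fun τ => i :: zr hn :: τ

lemma jmap_inj : Function.Injective (jmap hn i) := by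
  intro a b h
  simpa [jmap] using h

def uraw (h : H) (f : Fsp n H) : ∀ _ : Wd n, H := fun σ =>
  if σ = [i] then h else if σ.take 2 = [i, zr hn] then f (σ.drop 2) else 0

lemma take2_eq {σ : Wd n} {a b : Fin n} (h : σ.take 2 = [a, b]) :
    σ = a :: b :: σ.drop 2 := by
  conv_lhs => rw [← List.take_append_drop 2 σ]
  rw [h]
  rfl

lemma uraw_single (h : H) (f : Fsp n H) : uraw hn i h f [i] = h := by
  simp [uraw]

lemma uraw_jmap (h : H) (f : Fsp n H) (τ : Wd n) : uraw hn i h f (jmap hn i τ) = f τ := by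
  simp [uraw, jmap]

lemma uraw_ne_head {h : H} {f : Fsp n H} {σ : Wd n} (hne : uraw hn i h f σ ≠ 0) :
    σ.head? = some i := by
  by_cases h1 : σ = [i]
  · subst h1; rfl
  · by_cases h2 : σ.take 2 = [i, zr hn]
    · rw [take2_eq h2]; rfl
    · exact absurd (by simp only [uraw, if_neg h1, if_neg h2]) hne

-- pointwise inner decomposition
lemma uraw_inner_pt (h h' : H) (f f' : Fsp n H) (σ : Wd n) :
    ⟪uraw hn i h f σ, uraw hn i h' f' σ⟫_ℂ =
      (if σ = [i] then ⟪h, h'⟫_ℂ else 0) +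
      (if σ.take 2 = [i, zr hn] then ⟪(f : ∀ _ : Wd n, H) (σ.drop 2), (f' : ∀ _ : Wd n, H) (σ.drop 2)⟫_ℂ else 0) := by
  simp only [uraw]
  by_cases h1 : σ = [i]
  · subst h1
    rw [if_pos rfl, if_pos rfl, if_pos rfl, if_neg (by simp), add_zero]
  · rw [if_neg h1, if_neg h1, if_neg h1]
    by_cases h2 : σ.take 2 = [i, zr hn]
    · rw [if_pos h2, if_pos h2, if_pos h2, zero_add]
    · rw [if_neg h2, if_neg h2, if_neg h2, inner_zero_left, zero_add]

lemma uraw_norm_pt (h : H) (f : Fsp n H) (σ : Wd n) :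
    ‖uraw hn i h f σ‖ ^ ((2 : ℝ≥0∞).toReal) =
      (if σ = [i] then ‖h‖ ^ ((2 : ℝ≥0∞).toReal) else 0) +
      (if σ.take 2 = [i, zr hn] then ‖(f : ∀ _ : Wd n, H) (σ.drop 2)‖ ^ ((2 : ℝ≥0∞).toReal) else 0) := by
  simp only [uraw]
  by_cases h1 : σ = [i]
  · subst h1
    rw [if_pos rfl, if_pos rfl, if_neg (by simp), add_zero]
  · rw [if_neg h1, if_neg h1]
    by_cases h2 : σ.take 2 = [i, zr hn]
    · rw [if_pos h2, if_pos h2, zero_add]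
    · rw [if_neg h2, if_neg h2, norm_zero, add_zero]
      rw [Real.zero_rpow (by norm_num)]

lemma summable_jmap_transport {β : Type*} [AddCommMonoid β] [TopologicalSpace β] (g : Wd n → β)
    (hz : ∀ σ, σ.take 2 ≠ [i, zr hn] → g σ = 0)
    (hs : Summable fun τ => g (jmap hn i τ)) : Summable g := by
  refine (Function.Injective.summable_iff (jmap_inj hn i) ?_).1 hs
  intro σ hσ
  refine hz σ fun h2 => hσ ?_
  exact ⟨σ.drop 2, (take2_eq h2).symm⟩

lemma uraw_memℓp (h : H) (f : Fsp n H) : Memℓp (uraw hn i h f) 2 := by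
  refine memℓp_gen ?_
  have heq : (fun σ => ‖uraw hn i h f σ‖ ^ ((2 : ℝ≥0∞).toReal)) =
      (fun σ => (if σ = [i] then ‖h‖ ^ ((2 : ℝ≥0∞).toReal) else 0) +
        (if σ.take 2 = [i, zr hn] then ‖(f : ∀ _ : Wd n, H) (σ.drop 2)‖ ^ ((2 : ℝ≥0∞).toReal) else 0)) :=
    funext (uraw_norm_pt hn i h f)
  rw [heq]
  refine Summable.add ?_ ?_
  · exact summable_of_ne_finset_zero (s := {[i]}) (fun σ hσ => by
      rw [if_neg]; simpa using hσ)
  · refine summable_jmap_transport hn i _ (fun σ h2 => if_neg h2) ?_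
    have hbase : Summable fun τ : Wd n => ‖(f : ∀ _ : Wd n, H) τ‖ ^ ((2 : ℝ≥0∞).toReal) :=
      (lp.memℓp f).summable (by norm_num)
    refine hbase.congr fun τ => ?_
    simp [jmap]

def U0 (h : H) (f : Fsp n H) : Fsp n H := ⟨uraw hn i h f, uraw_memℓp hn i h f⟩

lemma U0_coe (h : H) (f : Fsp n H) (σ : Wd n) :
    (U0 hn i h f : ∀ _ : Wd n, H) σ = uraw hn i h f σ := rfl

lemma summable_inner_part (f f' : Fsp n H) :
    Summable (fun σ : Wd n => (if σ.take 2 = [i, zr hn] then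
      ⟪(f : ∀ _ : Wd n, H) (σ.drop 2), (f' : ∀ _ : Wd n, H) (σ.drop 2)⟫_ℂ else 0)) := by
  refine summable_jmap_transport hn i _ (fun σ h2 => if_neg h2) ?_
  have hbase : Summable fun τ : Wd n => ⟪(f : ∀ _ : Wd n, H) τ, (f' : ∀ _ : Wd n, H) τ⟫_ℂ :=
    lp.summable_inner f f'
  refine hbase.congr fun τ => ?_
  simp [jmap]

lemma tsum_jmap (g g' : Fsp n H) :
    ∑' σ : Wd n, (if σ.take 2 = [i, zr hn] then
      ⟪(g : ∀ _ : Wd n, H) (σ.drop 2), (g' : ∀ _ : Wd n, H) (σ.drop 2)⟫_ℂ else 0) = ⟪g, g'⟫_ℂ := by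
  rw [lp.inner_eq_tsum]
  rw [← Function.Injective.tsum_eq (jmap_inj hn i) (f := fun σ =>
      (if σ.take 2 = [i, zr hn] then
        ⟪(g : ∀ _ : Wd n, H) (σ.drop 2), (g' : ∀ _ : Wd n, H) (σ.drop 2)⟫_ℂ else 0)) ?_]
  · refine tsum_congr fun τ => ?_
    simp [jmap]
  · intro σ hσ
    by_cases h2 : σ.take 2 = [i, zr hn]
    · exact ⟨σ.drop 2, (take2_eq h2).symm⟩
    · exact absurd (if_neg h2) hσ

lemma U0_inner_same (h h' : H) (f f' : Fsp n H) :
    ⟪U0 hn i h f, U0 hn i h' f'⟫_ℂ = ⟪h, h'⟫_ℂ + ⟪f, f'⟫_ℂ := by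
  rw [lp.inner_eq_tsum]
  have heq : ∀ σ : Wd n, ⟪(U0 hn i h f : ∀ _ : Wd n, H) σ, (U0 hn i h' f' : ∀ _ : Wd n, H) σ⟫_ℂ =
      (if σ = [i] then ⟪h, h'⟫_ℂ else 0) +
      (if σ.take 2 = [i, zr hn] then ⟪(f : ∀ _ : Wd n, H) (σ.drop 2), (f' : ∀ _ : Wd n, H) (σ.drop 2)⟫_ℂ else 0) :=
    fun σ => uraw_inner_pt hn i h h' f f' σ
  rw [tsum_congr heq, Summable.tsum_add (summable_of_ne_finset_zero (s := {[i]}) (fun σ hσ => by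
      rw [if_neg]; simpa using hσ)) (summable_inner_part hn i f f')]
  rw [tsum_ite_eq, tsum_jmap hn i f f']

lemma U0_inner_orth (j : Fin n) (hij : i ≠ j) (h h' : H) (f f' : Fsp n H) :
    ⟪U0 hn i h f, U0 hn j h' f'⟫_ℂ = 0 := by
  rw [lp.inner_eq_tsum]
  rw [tsum_congr (fun σ => ?_), tsum_zero]
  rw [U0_coe, U0_coe]
  by_cases h1 : uraw hn i h f σ = 0
  · rw [h1, inner_zero_left]
  · by_cases h2 : uraw hn j h' f' σ = 0
    · rw [h2, inner_zero_right]
    · exact absurd ((uraw_ne_head hn i h1).symm.trans (uraw_ne_head hn j h2)) (by simpa using hij)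

lemma U0_add (h h' : H) (f f' : Fsp n H) :
    U0 hn i (h + h') (f + f') = U0 hn i h f + U0 hn i h' f' := by
  apply Subtype.ext
  funext σ
  rw [lp.coeFn_add]
  simp only [U0, uraw, Pi.add_apply]
  by_cases h1 : σ = [i]
  · rw [if_pos h1, if_pos h1, if_pos h1]
  · rw [if_neg h1, if_neg h1, if_neg h1]
    by_cases h2 : σ.take 2 = [i, zr hn]
    · rw [if_pos h2, if_pos h2, if_pos h2, lp.coeFn_add, Pi.add_apply]
    · rw [if_neg h2, if_neg h2, if_neg h2, add_zero]

lemma U0_smul (c : ℂ) (h : H) (f : Fsp n H) :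
    U0 hn i (c • h) (c • f) = c • U0 hn i h f := by
  apply Subtype.ext
  funext σ
  rw [lp.coeFn_smul]
  simp only [U0, uraw, Pi.smul_apply]
  by_cases h1 : σ = [i]
  · rw [if_pos h1, if_pos h1]
  · rw [if_neg h1, if_neg h1]
    by_cases h2 : σ.take 2 = [i, zr hn]
    · rw [if_pos h2, if_pos h2, lp.coeFn_smul, Pi.smul_apply]
    · rw [if_neg h2, if_neg h2, smul_zero]

end UPart
section Asm
variable {n : ℕ}


abbrev Esp (n : ℕ) (H : Type u) [NormedAddCommGroup H] [InnerProductSpace ℂ H] : Type u :=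
  WithLp 2 (H × Fsp n H)

def eqv (n : ℕ) (H : Type u) [NormedAddCommGroup H] [InnerProductSpace ℂ H] :
    Esp n H ≃L[ℂ] H × Fsp n H := WithLp.prodContinuousLinearEquiv 2 ℂ H (Fsp n H)

lemma eqv_symm_fst (a : H × Fsp n H) : (WithLp.ofLp ((eqv n H).symm a)).1 = a.1 := rfl
lemma eqv_symm_snd (a : H × Fsp n H) : (WithLp.ofLp ((eqv n H).symm a)).2 = a.2 := rfl

lemma esp_inner (x y : Esp n H) :
    ⟪x, y⟫_ℂ = ⟪((eqv n H) x).1, ((eqv n H) y).1⟫_ℂ + ⟪((eqv n H) x).2, ((eqv n H) y).2⟫_ℂ :=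
  WithLp.prod_inner_apply x y

-- orthogonal projection pair identity
lemma proj_inner_split (K : Submodule ℂ H) [K.HasOrthogonalProjection] (v w : H) :
    ⟪v, w⟫_ℂ = ⟪(Submodule.orthogonalProjection K v : H), (Submodule.orthogonalProjection K w : H)⟫_ℂ +
      ⟪v - Submodule.orthogonalProjection K v, w - Submodule.orthogonalProjection K w⟫_ℂ := by
  have h1 : ⟪v - Submodule.orthogonalProjection K v, (Submodule.orthogonalProjection K w : H)⟫_ℂ = 0 :=
    Submodule.starProjection_inner_eq_zero v _ (Submodule.orthogonalProjection K w).2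
  have h2 : ⟪(Submodule.orthogonalProjection K v : H), w - Submodule.orthogonalProjection K w⟫_ℂ = 0 := by
    have h2' : ⟪w - Submodule.orthogonalProjection K w, (Submodule.orthogonalProjection K v : H)⟫_ℂ = 0 :=
      Submodule.starProjection_inner_eq_zero w _ (Submodule.orthogonalProjection K v).2
    rw [← inner_conj_symm, h2',
      map_zero]
  calc ⟪v, w⟫_ℂ = ⟪(Submodule.orthogonalProjection K v : H) + (v - Submodule.orthogonalProjection K v),
        (Submodule.orthogonalProjection K w : H) + (w - Submodule.orthogonalProjection K w)⟫_ℂ := by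
        rw [add_sub_cancel, add_sub_cancel]
    _ = _ := by
        rw [inner_add_left, inner_add_right, inner_add_right, h1, h2, add_zero, zero_add]

end Asm

section Build
variable {n : ℕ}

instance : CompleteSpace (Esp n H) := by
  unfold Esp
  infer_instance

def Ulm (hn : 0 < n) (i : Fin n) : (H × Fsp n H) →ₗ[ℂ] Fsp n H where
  toFun p := U0 hn i p.1 p.2
  map_add' p q := by
    simp only [Prod.fst_add, Prod.snd_add]
    exact U0_add hn i p.1 q.1 p.2 q.2
  map_smul' c p := by
    simp only [Prod.smul_fst, Prod.smul_snd, RingHom.id_apply]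
    exact U0_smul hn i c p.1 p.2

def Cop (S : Set (Wd n)) (M : Wd n → H) (i : Fin n) : H →L[ℂ] H :=
  ContinuousLinearMap.id ℂ H -
    (Dbar (S := S) (M := M) (i := i)).subtypeL.comp
      (Submodule.orthogonalProjection (Dbar (S := S) (M := M) (i := i)))

lemma Cop_apply (S : Set (Wd n)) (M : Wd n → H) (i : Fin n) (v : H) :
    Cop S M i v = v - (Submodule.orthogonalProjection (Dbar (S := S) (M := M) (i := i)) v : H) := rfl

variable (hn : 0 < n) {S : Set (Wd n)} {M : Wd n → H} {i j : Fin n}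

variable (h1 : ∀ b c : Wd n, (i :: b) ∈ S → (i :: c) ∈ S →
  ⟪M (i :: b), M (i :: c)⟫_ℂ = ⟪M b, M c⟫_ℂ)
variable (h1j : ∀ b c : Wd n, (j :: b) ∈ S → (j :: c) ∈ S →
  ⟪M (j :: b), M (j :: c)⟫_ℂ = ⟪M b, M c⟫_ℂ)

def Wlin : Esp n H →ₗ[ℂ] Esp n H :=
  ((eqv n H).symm.toLinearEquiv.toLinearMap).comp
    ((LinearMap.prod
        ((Topi h1).toLinearMap.comp (LinearMap.fst ℂ H (Fsp n H)))
        ((Ulm hn i).comp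
          (LinearMap.prodMap ((Cop S M i).toLinearMap) (LinearMap.id)))).comp
      (eqv n H).toLinearEquiv.toLinearMap)

lemma eqv_Wlin (x : Esp n H) :
    (eqv n H) (Wlin hn h1 x) =
      (Topi h1 ((eqv n H) x).1,
       U0 hn i (Cop S M i ((eqv n H) x).1) (((eqv n H) x).2)) := by
  show (eqv n H) ((eqv n H).symm _) = _
  rw [ContinuousLinearEquiv.apply_symm_apply]
  rfl

lemma Wlin_inner_same (x y : Esp n H) :
    ⟪Wlin hn h1 x, Wlin hn h1 y⟫_ℂ = ⟪x, y⟫_ℂ := by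
  rw [esp_inner (Wlin hn h1 x) (Wlin hn h1 y), eqv_Wlin, eqv_Wlin]
  show ⟪Topi h1 ((eqv n H) x).1, Topi h1 ((eqv n H) y).1⟫_ℂ +
      ⟪U0 hn i (Cop S M i ((eqv n H) x).1) (((eqv n H) x).2),
       U0 hn i (Cop S M i ((eqv n H) y).1) (((eqv n H) y).2)⟫_ℂ = _
  rw [Topi_inner h1, U0_inner_same hn i, esp_inner x y, Cop_apply, Cop_apply]
  rw [proj_inner_split (Dbar (S := S) (M := M) (i := i)) ((eqv n H) x).1 ((eqv n H) y).1]
  ring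

lemma Wlin_inner_orth (hij : i ≠ j)
    (h2 : ∀ b c : Wd n, (i :: b) ∈ S → (j :: c) ∈ S → ⟪M (i :: b), M (j :: c)⟫_ℂ = 0)
    (x y : Esp n H) :
    ⟪Wlin hn h1 x, Wlin hn h1j y⟫_ℂ = 0 := by
  rw [esp_inner (Wlin hn h1 x) (Wlin hn h1j y), eqv_Wlin, eqv_Wlin]
  show ⟪Topi h1 ((eqv n H) x).1, Topi h1j ((eqv n H) y).1⟫_ℂ +
      ⟪U0 hn i (Cop S M i ((eqv n H) x).1) (((eqv n H) x).2),
       U0 hn j (Cop S M j ((eqv n H) y).1) (((eqv n H) y).2)⟫_ℂ = 0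
  rw [Ri_orth h2 _ (Topi_mem_Ri h1 _) _ (Topi_mem_Ri h1j _),
    U0_inner_orth hn i j hij, add_zero]

def Wiso : Esp n H →ₗᵢ[ℂ] Esp n H :=
  ⟨Wlin hn h1, fun x => by
    simp only [@norm_eq_sqrt_re_inner ℂ]
    rw [Wlin_inner_same hn h1 x x]⟩

def Wc : Esp n H →L[ℂ] Esp n H := (Wiso hn h1).toContinuousLinearMap

lemma Wc_apply (x : Esp n H) : Wc hn h1 x = Wlin hn h1 x := rfl

lemma Wc_adjoint_same : adjoint (Wc hn h1) * (Wc hn h1) = 1 := by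
  refine ContinuousLinearMap.ext fun x => ?_
  rw [mul_apply_eq_comp, one_apply_eq_self]
  refine ext_inner_left ℂ fun v => ?_
  rw [adjoint_inner_right, Wc_apply, Wc_apply, Wlin_inner_same hn h1]

lemma Wc_adjoint_orth (hij : i ≠ j)
    (h2 : ∀ b c : Wd n, (i :: b) ∈ S → (j :: c) ∈ S → ⟪M (i :: b), M (j :: c)⟫_ℂ = 0) :
    adjoint (Wc hn h1) * (Wc hn h1j) = 0 := by
  refine ContinuousLinearMap.ext fun x => ?_
  rw [mul_apply_eq_comp, zero_apply]
  refine ext_inner_left ℂ fun v => ?_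
  rw [adjoint_inner_right, Wc_apply, Wc_apply, Wlin_inner_orth hn h1 h1j hij h2,
    inner_zero_right]

def iota (n : ℕ) (H : Type u) [NormedAddCommGroup H] [InnerProductSpace ℂ H]
    [CompleteSpace H] : H →ₗᵢ[ℂ] Esp n H :=
  ⟨((eqv n H).symm.toLinearEquiv.toLinearMap).comp (LinearMap.inl ℂ H (Fsp n H)),
   fun h => by
    have hin : ⟪(eqv n H).symm (h, 0), (eqv n H).symm (h, 0)⟫_ℂ = ⟪h, h⟫_ℂ := by
      rw [esp_inner]
      simp only [ContinuousLinearEquiv.apply_symm_apply]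
      simp
    simp only [@norm_eq_sqrt_re_inner ℂ]
    show Real.sqrt (RCLike.re ⟪(eqv n H).symm (h, 0), (eqv n H).symm (h, 0)⟫_ℂ) = _
    rw [hin]⟩

lemma iota_apply (h : H) : iota n H h = (eqv n H).symm (h, 0) := rfl

lemma U0_zero : U0 hn i (0 : H) (0 : Fsp n H) = 0 := by
  have := (Ulm (H := H) hn i).map_zero
  exact this

lemma Wc_iota {β : Wd n} (hb : (i :: β) ∈ S) :
    Wc hn h1 (iota n H (M β)) = iota n H (M (i :: β)) := by
  apply (eqv n H).injective
  rw [Wc_apply, eqv_Wlin]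
  have h1' : ((eqv n H) (iota n H (M β))).1 = M β := by
    rw [iota_apply]
    simp only [ContinuousLinearEquiv.apply_symm_apply]
  have h2' : ((eqv n H) (iota n H (M β))).2 = 0 := by
    rw [iota_apply]
    simp only [ContinuousLinearEquiv.apply_symm_apply]
  rw [h1', h2', Topi_M h1 hb]
  have hc : Cop S M i (M β) = 0 := by
    rw [Cop_apply]
    rw [Submodule.orthogonalProjection_mem_subspace_eq_self
      (⟨M β, M_mem_Dbar hb⟩ : ↥(Dbar (S := S) (M := M) (i := i)))]
    exact sub_self _
  rw [hc, U0_zero hn, iota_apply, ContinuousLinearEquiv.apply_symm_apply]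

end Build

lemma reverse_dir {n : ℕ} (hn : 0 < n) (S : Set (Wd n)) (hadm : Adm S) (M : Wd n → H)
    (hK : ∀ x y : {p : Wd n × Wd n // p.1 ++ p.2 ∈ S}, K3 M x.1 y.1 = K4 M x.1 y.1) :
    Nonempty (IsomRepVec n H S M) := by
  have h1all : ∀ (i : Fin n) (b c : Wd n), (i :: b) ∈ S → (i :: c) ∈ S →
      ⟪M (i :: b), M (i :: c)⟫_ℂ = ⟪M b, M c⟫_ℂ := by
    intro i b c hb hc
    have := hK ⟨([i], b), hb⟩ ⟨([i], c), hc⟩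
    rw [K3, K4] at this
    rw [if_pos ⟨[], by simp⟩] at this
    simpa [wq] using this
  have h2all : ∀ (i j : Fin n), i ≠ j → ∀ (b c : Wd n), (i :: b) ∈ S → (j :: c) ∈ S →
      ⟪M (i :: b), M (j :: c)⟫_ℂ = 0 := by
    intro i j hij b c hb hc
    have := hK ⟨([i], b), hb⟩ ⟨([j], c), hc⟩
    rw [K3, K4] at this
    rw [if_neg, if_neg] at this
    · simpa using this
    · rintro ⟨τ, hτ⟩
      simp only [List.singleton_append, List.cons.injEq] at hτ
      exact hij hτ.1
    · rintro ⟨τ, hτ⟩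
      simp only [List.singleton_append, List.cons.injEq] at hτ
      exact hij hτ.1.symm
  refine ⟨{
    E := Esp n H
    ι := iota n H
    W := fun i => Wc hn (h1all i)
    isom := fun i => Wc_adjoint_same hn (h1all i)
    orth := fun i j hij => Wc_adjoint_orth hn (h1all i) (h1all j) hij (h2all i j hij)
    moment := ?_ }⟩
  intro σ
  induction σ with
  | nil =>
    intro _
    rw [wordOp_nil, one_apply_eq_self]
  | cons i β ih =>
    intro hσ
    have hβ : β ∈ S := hadm [i] β hσ
    rw [wordOp_cons, mul_apply_eq_comp, ← ih hβ]
    exact (Wc_iota hn (h1all i) hσ).symm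


/-- There is a *-representation `π` of `C*(S₁,…,Sₙ)` on `E ⊇ H` with
`M(p) = π(p(S₁,…,Sₙ)) M(g₀)` for all `p ∈ ℂΣ` (stated via isometries with orthogonal
ranges) iff `K₃ = K₄` on `Λ_Σ`. -/
theorem stmt5 {n : ℕ} (hn : 0 < n) (S : Set (Wd n)) (hne : S.Nonempty) (hadm : Adm S)
    (M : Wd n → H) :
    Nonempty (IsomRepVec n H S M) ↔
      ∀ x y : {p : Wd n × Wd n // p.1 ++ p.2 ∈ S}, K3 M x.1 y.1 = K4 M x.1 y.1 := by
  constructor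
  · rintro ⟨R⟩
    exact forward_dir S hne hadm M R
  · intro hK
    exact reverse_dir hn S hadm M hK

end
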